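/- Let H be a real Hilbert space, I = {1,...,n}, μ > 0, and for each i ∈ I let λ_i > 0 with Σ_{i∈I} λ_i = 1 and let A_i : H ⇉ H be maximally monotone. If there exists i₀ ∈ I such that A_{i₀} is at most single-valued (i.e., for every x ∈ H the set A_{i₀} x is either empty or a singleton), then R_μ(A, λ) is at most single-valued. -/
import Mathlib


open RealInnerProductSpace

namespace SVP

variable {H : Type*} [NormedAddCommGroup H] [InnerProductSpace ℝ H]

/-- Inverse of a set-valued mapping: `x ∈ inv A u ↔ u ∈ A x`. -/
def inv (A : H → Set H) : H → Set H := fun u => {x | u ∈ A x}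

/-- Pointwise (Minkowski) sum of two set-valued mappings. -/
def add (A B : H → Set H) : H → Set H := fun x => {w | ∃ u ∈ A x, ∃ v ∈ B x, w = u + v}

/-- Pointwise difference of two set-valued mappings. -/
def sub (A B : H → Set H) : H → Set H := fun x => {w | ∃ u ∈ A x, ∃ v ∈ B x, w = u - v}

/-- Pointwise scalar multiple of a set-valued mapping. -/
def smul (c : ℝ) (A : H → Set H) : H → Set H := fun x => (fun u => c • u) '' A x

/-- The identity as a set-valued mapping. -/
def id' : H → Set H := fun x => {x}

/-- Composition of set-valued mappings: `(comp A B) x = ⋃ y ∈ B x, A y`. -/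
def comp (A B : H → Set H) : H → Set H := fun x => ⋃ y ∈ B x, A y

/-- Weighted pointwise (Minkowski) combination `Σ_i lam i • (B i)`. -/
def lcomb {n : ℕ} (lam : Fin n → ℝ) (B : Fin n → H → Set H) : H → Set H :=
  fun x => {u | ∃ v : Fin n → H, (∀ i, v i ∈ B i x) ∧ u = ∑ i, lam i • v i}

/-- The `λ`-weighted resolvent average with parameter `μ`:
`R_μ(A, λ) = (Σ_i λ_i (A_i + μ⁻¹ Id)⁻¹)⁻¹ − μ⁻¹ Id`. -/
def resAvg {n : ℕ} (μ : ℝ) (lam : Fin n → ℝ) (A : Fin n → H → Set H) : H → Set H :=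
  sub (inv (lcomb lam (fun i => inv (add (A i) (smul μ⁻¹ id'))))) (smul μ⁻¹ id')

/-- Monotonicity of a set-valued mapping. -/
def IsMonotone (A : H → Set H) : Prop :=
  ∀ ⦃x y u v : H⦄, u ∈ A x → v ∈ A y → 0 ≤ ⟪x - y, u - v⟫

/-- Maximal monotonicity: the graph is not properly contained in the graph of
another monotone mapping. -/
def IsMaxMonotone (A : H → Set H) : Prop :=
  IsMonotone A ∧ ∀ B : H → Set H, IsMonotone B → (∀ x, A x ⊆ B x) → ∀ x, B x ⊆ A x

/-- Domain of a set-valued mapping. -/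
def dom (A : H → Set H) : Set H := {x | (A x).Nonempty}

/-- Range of a set-valued mapping. -/
def ran (A : H → Set H) : Set H := {u | ∃ x, u ∈ A x}

/-- Graph of a set-valued mapping. -/
def graph (A : H → Set H) : Set (H × H) := {p | p.2 ∈ A p.1}

end SVP

variable {H : Type*} [NormedAddCommGroup H] [InnerProductSpace ℝ H] [CompleteSpace H]

/-- Single-valuedness is dominant: if some `A_{i₀}` is at most single-valued,
then so is `R_μ(A, λ)`. -/
theorem stmt11 {n : ℕ} (hn : 0 < n) {μ : ℝ} (hμ : 0 < μ) (lam : Fin n → ℝ)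
    (hpos : ∀ i, 0 < lam i) (hsum : ∑ i, lam i = 1) (A : Fin n → H → Set H)
    (hA : ∀ i, SVP.IsMaxMonotone (A i))
    (hsingle : ∃ i₀, ∀ x : H, (A i₀ x).Subsingleton) :
    ∀ x : H, (SVP.resAvg μ lam A x).Subsingleton := by
  obtain ⟨i₀, hi₀⟩ := hsingle
  intro x u hu u' hu'
  obtain ⟨w, hw, z, hz, rfl⟩ := hu
  obtain ⟨w', hw', z', hz', rfl⟩ := hu'
  simp only [SVP.smul, SVP.id', Set.image_singleton, Set.mem_singleton_iff] at hz hz'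
  subst hz; subst hz'
  obtain ⟨v, hv, hx⟩ := hw
  obtain ⟨v', hv', hx'⟩ := hw'
  simp only [SVP.inv, SVP.add, SVP.smul, SVP.id', Set.image_singleton,
    Set.mem_singleton_iff, Set.mem_setOf_eq, exists_eq_left] at hv hv'
  choose a ha heq using hv
  choose a' ha' heq' using hv'
  have key : ∀ i, μ⁻¹ * ‖v i - v' i‖ ^ 2 ≤ ⟪v i - v' i, w - w'⟫ := by
    intro i
    have hmono := (hA i).1 (ha i) (ha' i)
    have hdiff : w - w' = (a i - a' i) + μ⁻¹ • (v i - v' i) := by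
      rw [heq i, heq' i, smul_sub]; abel
    rw [hdiff, inner_add_right, real_inner_smul_right, real_inner_self_eq_norm_sq]
    nlinarith [hmono]
  have hsum0 : ∑ i, lam i • (v i - v' i) = (0 : H) := by
    simp only [smul_sub, Finset.sum_sub_distrib]
    rw [← hx, ← hx', sub_self]
  have hinner : ∑ i, lam i * ⟪v i - v' i, w - w'⟫ = 0 := by
    have h := congrArg (fun z : H => ⟪z, w - w'⟫) hsum0
    simpa [sum_inner, real_inner_smul_left] using h
  have hnn : ∀ i ∈ Finset.univ, 0 ≤ lam i * ⟪v i - v' i, w - w'⟫ := by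
    intro i _
    have h1 : (0:ℝ) ≤ μ⁻¹ * ‖v i - v' i‖ ^ 2 := by positivity
    exact mul_nonneg (hpos i).le (le_trans h1 (key i))
  have h0 := (Finset.sum_eq_zero_iff_of_nonneg hnn).1 hinner i₀ (Finset.mem_univ _)
  have hip : ⟪v i₀ - v' i₀, w - w'⟫ = 0 := by
    rcases mul_eq_zero.1 h0 with h | h
    · exact absurd h (hpos i₀).ne'
    · exact h
  have hμi : (0:ℝ) < μ⁻¹ := inv_pos.2 hμ
  have hsq : ‖v i₀ - v' i₀‖ ^ 2 = 0 := by
    nlinarith [key i₀, sq_nonneg ‖v i₀ - v' i₀‖]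
  have hv0 : v i₀ = v' i₀ :=
    sub_eq_zero.1 (norm_eq_zero.1 (pow_eq_zero_iff two_ne_zero |>.1 hsq))
  have ha'' : a' i₀ ∈ A i₀ (v i₀) := by rw [hv0]; exact ha' i₀
  have haa : a i₀ = a' i₀ := hi₀ (v i₀) (ha i₀) ha''
  have hww : w = w' := by rw [heq i₀, heq' i₀, haa, hv0]
  rw [hww]
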